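/- arXiv:1301.1493 — 4 statements merged into one kernel-verified Lean document; each statement's English description precedes it below -/
import Mathlib

section
/- For any G ∈ 𝒢, π₀ ∈ Π, and g ∈ S_n, the search tree satisfies 𝒯(G^g, π₀^g) = 𝒯(G,π₀)^g; that is, ν is a node of 𝒯(G,π₀) if and only if ν^g is a node of 𝒯(G^g,π₀^g). -/
/-- Relabelling action of a permutation on a graph: `v^g` adjacent to `w^g` iff `v` adjacent `w`. -/
def gactG {n : ℕ} (g : Equiv.Perm (Fin n)) (G : SimpleGraph (Fin n)) : SimpleGraph (Fin n) where
  Adj v w := G.Adj (g⁻¹ v) (g⁻¹ w)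
  symm := ⟨fun _ _ h => G.adj_symm h⟩
  loopless := ⟨fun _ h => G.irrefl h⟩

/-- Relabelling action of a permutation on a colouring. -/
def gactC {n : ℕ} (g : Equiv.Perm (Fin n)) (π : Fin n → ℕ) : Fin n → ℕ :=
  fun v => π (g⁻¹ v)

/-- A colouring of `V`: a function surjective onto `{1,…,k}` for some `k`. -/
def IsCol {n : ℕ} (π : Fin n → ℕ) : Prop := ∃ k, Set.range π = Set.Icc 1 k

/-- `π'` is finer than or equal to `π`. -/
def FinerC {n : ℕ} (π' π : Fin n → ℕ) : Prop := ∀ v w, π v < π w → π' v < π' w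

/-- Nodes of the search tree with child rule given by the target cells `Tc`. -/
inductive IsTNode {n : ℕ} (Tc : List (Fin n) → Set (Fin n)) : List (Fin n) → Prop
  | root : IsTNode Tc []
  | child {ν : List (Fin n)} {w : Fin n} :
      IsTNode Tc ν → w ∈ Tc ν → IsTNode Tc (ν ++ [w])

/-- The labelled graph `G^π` for a (discrete) colouring `π`, as a set of labelled edges. -/
def relabelSet {n : ℕ} (G : SimpleGraph (Fin n)) (π : Fin n → ℕ) : Set (ℕ × ℕ) :=
  {p | ∃ v w, G.Adj v w ∧ π v = p.1 ∧ π w = p.2}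

/-- Equitable colouring: same-coloured vertices have equally many neighbours of each colour. -/
def IsEquit {n : ℕ} (G : SimpleGraph (Fin n)) (π : Fin n → ℕ) : Prop :=
  ∀ v w, π v = π w → ∀ j,
    {u | G.Adj v u ∧ π u = j}.ncard = {u | G.Adj w u ∧ π u = j}.ncard

/-- The search tree satisfies 𝒯(G^g,π₀^g) = 𝒯(G,π₀)^g. -/
theorem stmt7 {n : ℕ}
    (R : SimpleGraph (Fin n) → (Fin n → ℕ) → List (Fin n) → (Fin n → ℕ))
    (T : SimpleGraph (Fin n) → (Fin n → ℕ) → List (Fin n) → Set (Fin n))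
    (hR1 : ∀ G π ν, FinerC (R G π ν) π)
    (hR2 : ∀ G π ν, ∀ v ∈ ν, (R G π ν) ⁻¹' {R G π ν v} = {v})
    (hR3 : ∀ G π ν (g : Equiv.Perm (Fin n)),
      R (gactG g G) (gactC g π) (ν.map g) = gactC g (R G π ν))
    (hT1 : ∀ G π ν, Function.Injective (R G π ν) → T G π ν = ∅)
    (hT2 : ∀ G π ν, ¬ Function.Injective (R G π ν) →
      ∃ j, T G π ν = (R G π ν) ⁻¹' {j} ∧ ∃ v w, v ∈ T G π ν ∧ w ∈ T G π ν ∧ v ≠ w)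
    (hT3 : ∀ G π ν (g : Equiv.Perm (Fin n)),
      T (gactG g G) (gactC g π) (ν.map g) = g '' (T G π ν))
    (G : SimpleGraph (Fin n)) (π₀ : Fin n → ℕ) (g : Equiv.Perm (Fin n)) :
    ∀ ν : List (Fin n),
      IsTNode (T G π₀) ν ↔ IsTNode (T (gactG g G) (gactC g π₀)) (ν.map g) := by
  have fwd : ∀ (G : SimpleGraph (Fin n)) (π : Fin n → ℕ) (g : Equiv.Perm (Fin n))
      (ν : List (Fin n)), IsTNode (T G π) ν →
      IsTNode (T (gactG g G) (gactC g π)) (ν.map g) := by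
    intro G π g ν h
    induction h with
    | root => exact IsTNode.root
    | child h hw ih =>
        rw [List.map_append]
        exact IsTNode.child ih (by rw [hT3]; exact ⟨_, hw, rfl⟩)
  intro ν
  constructor
  · exact fwd G π₀ g ν
  · intro h
    have h2 := fwd (gactG g G) (gactC g π₀) g⁻¹ (ν.map g) h
    have e1 : gactG g⁻¹ (gactG g G) = G := by
      ext v w; simp [gactG]
    have e2 : gactC g⁻¹ (gactC g π₀) = π₀ := by
      funext v; simp [gactC]
    have e3 : (ν.map g).map ⇑g⁻¹ = ν := by
      rw [List.map_map]
      convert List.map_id ν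
      funext x; simp
    rwa [e1, e2, e3] at h2
end

section
/- If ν is a node of the search tree 𝒯(G,π₀) and g ∈ Aut(G,π₀), then ν^g is also a node of 𝒯(G,π₀), and the subtree rooted at ν^g equals the image under g of the subtree rooted at ν: 𝒯(G,π₀,ν^g) = 𝒯(G,π₀,ν)^g. -/
lemma node_map {n : ℕ}
    (T : SimpleGraph (Fin n) → (Fin n → ℕ) → List (Fin n) → Set (Fin n))
    (hT3 : ∀ G π ν (g : Equiv.Perm (Fin n)),
      T (gactG g G) (gactC g π) (ν.map g) = g '' (T G π ν))
    (G : SimpleGraph (Fin n)) (π₀ : Fin n → ℕ) (g : Equiv.Perm (Fin n))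
    (hG : gactG g G = G) (hπ : gactC g π₀ = π₀) :
    ∀ ν, IsTNode (T G π₀) ν → IsTNode (T G π₀) (ν.map g) := by
  intro ν hν
  induction hν with
  | root => exact .root
  | @child ν w h hw ih =>
    rw [List.map_append, List.map_singleton]
    refine .child ih ?_
    have h3 := hT3 G π₀ ν g
    rw [hG, hπ] at h3
    rw [h3]
    exact ⟨w, hw, rfl⟩

/-- For an automorphism g, ν^g is a node and 𝒯(G,π₀,ν^g) = 𝒯(G,π₀,ν)^g. -/
theorem stmt8 {n : ℕ}
    (R : SimpleGraph (Fin n) → (Fin n → ℕ) → List (Fin n) → (Fin n → ℕ))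
    (T : SimpleGraph (Fin n) → (Fin n → ℕ) → List (Fin n) → Set (Fin n))
    (hR1 : ∀ G π ν, FinerC (R G π ν) π)
    (hR2 : ∀ G π ν, ∀ v ∈ ν, (R G π ν) ⁻¹' {R G π ν v} = {v})
    (hR3 : ∀ G π ν (g : Equiv.Perm (Fin n)),
      R (gactG g G) (gactC g π) (ν.map g) = gactC g (R G π ν))
    (hT1 : ∀ G π ν, Function.Injective (R G π ν) → T G π ν = ∅)
    (hT2 : ∀ G π ν, ¬ Function.Injective (R G π ν) →
      ∃ j, T G π ν = (R G π ν) ⁻¹' {j} ∧ ∃ v w, v ∈ T G π ν ∧ w ∈ T G π ν ∧ v ≠ w)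
    (hT3 : ∀ G π ν (g : Equiv.Perm (Fin n)),
      T (gactG g G) (gactC g π) (ν.map g) = g '' (T G π ν))
    (G : SimpleGraph (Fin n)) (π₀ : Fin n → ℕ) (g : Equiv.Perm (Fin n))
    (hg : gactG g G = G ∧ gactC g π₀ = π₀)
    (ν : List (Fin n)) (hν : IsTNode (T G π₀) ν) :
    IsTNode (T G π₀) (ν.map g) ∧
    ∀ μ : List (Fin n),
      (IsTNode (T G π₀) μ ∧ ν.map g <+: μ) ↔
      (∃ μ' : List (Fin n), (IsTNode (T G π₀) μ' ∧ ν <+: μ') ∧ μ = μ'.map g) := by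
  obtain ⟨hG, hπ⟩ := hg
  have hGinv : gactG g⁻¹ G = G := by
    conv_lhs => rw [← hG]
    ext v w
    simp [gactG]
  have hπinv : gactC g⁻¹ π₀ = π₀ := by
    funext v
    have := (congrFun hπ (g v)).symm
    simpa [gactC] using this
  refine ⟨node_map T hT3 G π₀ g hG hπ ν hν, fun μ => ⟨?_, ?_⟩⟩
  · rintro ⟨hμ, hpre⟩
    refine ⟨μ.map ⇑g⁻¹, ⟨node_map T hT3 G π₀ g⁻¹ hGinv hπinv μ hμ, ?_⟩, ?_⟩
    · have := hpre.map ⇑g⁻¹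
      simpa [List.map_map, Equiv.Perm.inv_def] using this
    · simp [List.map_map, Equiv.Perm.inv_def]
  · rintro ⟨μ', ⟨hμ', hpre⟩, rfl⟩
    exact ⟨node_map T hT3 G π₀ g hG hπ μ' hμ', hpre.map g⟩
end

section
/- Let ν be a node of the search tree 𝒯(G,π₀) and let π = R(G,π₀,ν). Then Aut(G,π) equals the point-wise stabilizer of the sequence ν in Aut(G,π₀); that is, Aut(G,π) = { g ∈ Aut(G,π₀) : v^g = v for every vertex v occurring in ν }. -/
/-- Aut(G,π) is the point-wise stabilizer of ν in Aut(G,π₀), where π = R(G,π₀,ν). -/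
theorem stmt9 {n : ℕ}
    (R : SimpleGraph (Fin n) → (Fin n → ℕ) → List (Fin n) → (Fin n → ℕ))
    (T : SimpleGraph (Fin n) → (Fin n → ℕ) → List (Fin n) → Set (Fin n))
    (hR1 : ∀ G π ν, FinerC (R G π ν) π)
    (hR2 : ∀ G π ν, ∀ v ∈ ν, (R G π ν) ⁻¹' {R G π ν v} = {v})
    (hR3 : ∀ G π ν (g : Equiv.Perm (Fin n)),
      R (gactG g G) (gactC g π) (ν.map g) = gactC g (R G π ν))
    (hT1 : ∀ G π ν, Function.Injective (R G π ν) → T G π ν = ∅)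
    (hT2 : ∀ G π ν, ¬ Function.Injective (R G π ν) →
      ∃ j, T G π ν = (R G π ν) ⁻¹' {j} ∧ ∃ v w, v ∈ T G π ν ∧ w ∈ T G π ν ∧ v ≠ w)
    (hT3 : ∀ G π ν (g : Equiv.Perm (Fin n)),
      T (gactG g G) (gactC g π) (ν.map g) = g '' (T G π ν))
    (G : SimpleGraph (Fin n)) (π₀ : Fin n → ℕ)
    (ν : List (Fin n)) (hν : IsTNode (T G π₀) ν) :
    ∀ g : Equiv.Perm (Fin n),
      (gactG g G = G ∧ gactC g (R G π₀ ν) = R G π₀ ν) ↔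
      ((gactG g G = G ∧ gactC g π₀ = π₀) ∧ ∀ v ∈ ν, g v = v) := by
  intro g
  constructor
  · rintro ⟨hG, hC⟩
    have hRν := hR1 G π₀ ν
    refine ⟨⟨hG, ?_⟩, ?_⟩
    · funext v
      by_contra hne
      have hv : R G π₀ ν (g⁻¹ v) = R G π₀ ν v := congrFun hC v
      have hne' : π₀ (g⁻¹ v) ≠ π₀ v := hne
      rcases lt_or_gt_of_ne hne' with h | h
      · have := hRν _ _ h
        omega
      · have := hRν _ _ h
        omega
    · intro v hv
      have h2 := hR2 G π₀ ν v hv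
      have hmem : g⁻¹ v ∈ (R G π₀ ν) ⁻¹' {R G π₀ ν v} := by
        exact congrFun hC v
      rw [h2] at hmem
      have : g⁻¹ v = v := hmem
      calc g v = g (g⁻¹ v) := by rw [this]
        _ = v := g.apply_symm_apply v
  · rintro ⟨⟨hG, hC⟩, hfix⟩
    refine ⟨hG, ?_⟩
    have hmap : ν.map g = ν := by
      conv_rhs => rw [← List.map_id ν]
      exact List.map_congr_left hfix
    have := hR3 G π₀ ν g
    rw [hmap, hG, hC] at this
    exact this.symm
end

section
/- For any leaf ν of the search tree, Aut(G,π₀) = { R(G,π₀,ν') R(G,π₀,ν)⁻¹ : ν' is a leaf of 𝒯(G,π₀) with φ(G,π₀,ν') = φ(G,π₀,ν) }. -/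
lemma rank_card {n : ℕ} {σ : Fin n → ℕ} (hinj : Function.Injective σ)
    (hcol : IsCol σ) (v : Fin n) :
    (Finset.univ.filter fun u => σ u ≤ σ v).card = σ v := by
  obtain ⟨k, hk⟩ := hcol
  have himg : Finset.image σ Finset.univ = Finset.Icc 1 k := by
    apply Finset.coe_injective
    simp [hk]
  have hkn : k = n := by
    have := congrArg Finset.card himg
    rw [Finset.card_image_of_injective _ hinj] at this
    simp [Nat.card_Icc] at this
    omega
  have hv1 : 1 ≤ σ v ∧ σ v ≤ k := by
    have : σ v ∈ Set.Icc 1 k := hk ▸ Set.mem_range_self v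
    simpa using this
  have h2 : Finset.image σ (Finset.univ.filter fun u => σ u ≤ σ v)
      = Finset.Icc 1 (σ v) := by
    have := Finset.filter_image (s := (Finset.univ : Finset (Fin n))) (f := σ)
      (p := fun m => m ≤ σ v)
    rw [← this, himg]
    ext m
    simp only [Finset.mem_filter, Finset.mem_Icc]
    omega
  have h3 := congrArg Finset.card h2
  rw [Finset.card_image_of_injective _ hinj, Nat.card_Icc] at h3
  omega

lemma key_col {n : ℕ} {π σ τ : Fin n → ℕ}
    (hσi : Function.Injective σ) (hτi : Function.Injective τ)
    (hσc : IsCol σ) (hτc : IsCol τ)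
    (hσf : FinerC σ π) (hτf : FinerC τ π)
    {v w : Fin n} (h : σ v = τ w) : π v = π w := by
  have bound : ∀ (ρ : Fin n → ℕ), Function.Injective ρ → IsCol ρ → FinerC ρ π →
      ∀ x : Fin n, (Finset.univ.filter fun u => π u < π x).card < ρ x ∧
        ρ x ≤ (Finset.univ.filter fun u => π u ≤ π x).card := by
    intro ρ hi hc hf x
    rw [← rank_card hi hc x]
    constructor
    · have hsub : (Finset.univ.filter fun u => π u < π x) ⊆
          ((Finset.univ.filter fun u => ρ u ≤ ρ x).erase x) := by
        intro u hu
        simp only [Finset.mem_filter, Finset.mem_univ, true_and] at hu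
        have := hf _ _ hu
        rw [Finset.mem_erase]
        refine ⟨fun hux => by simp [hux] at this, by simp; omega⟩
      calc (Finset.univ.filter fun u => π u < π x).card
          ≤ ((Finset.univ.filter fun u => ρ u ≤ ρ x).erase x).card :=
            Finset.card_le_card hsub
        _ < (Finset.univ.filter fun u => ρ u ≤ ρ x).card := by
            apply Finset.card_erase_lt_of_mem
            simp
    · apply Finset.card_le_card
      intro u hu
      simp only [Finset.mem_filter, Finset.mem_univ, true_and] at hu ⊢
      by_contra hlt
      exact absurd (hf x u (by omega)) (by omega)
  by_contra hne
  rcases Nat.lt_or_ge (π v) (π w) with hlt | hge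
  · have h1 := (bound σ hσi hσc hσf v).2
    have h2 := (bound τ hτi hτc hτf w).1
    have hsub : (Finset.univ.filter fun u => π u ≤ π v) ⊆
        (Finset.univ.filter fun u => π u < π w) := by
      intro u hu; simp at hu ⊢; omega
    have := Finset.card_le_card hsub
    omega
  · have hlt : π w < π v := by omega
    have h1 := (bound τ hτi hτc hτf w).2
    have h2 := (bound σ hσi hσc hσf v).1
    have hsub : (Finset.univ.filter fun u => π u ≤ π w) ⊆
        (Finset.univ.filter fun u => π u < π v) := by
      intro u hu; simp at hu ⊢; omega
    have := Finset.card_le_card hsub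
    omega

/-- Aut(G,π₀) = { R(ν')R(ν)⁻¹ : ν' a leaf with φ(ν') = φ(ν) }. -/
theorem stmt11 {n : ℕ} {Ω : Type*} [LinearOrder Ω]
    (R : SimpleGraph (Fin n) → (Fin n → ℕ) → List (Fin n) → (Fin n → ℕ))
    (T : SimpleGraph (Fin n) → (Fin n → ℕ) → List (Fin n) → Set (Fin n))
    (hR1 : ∀ G π ν, FinerC (R G π ν) π)
    (hR2 : ∀ G π ν, ∀ v ∈ ν, (R G π ν) ⁻¹' {R G π ν v} = {v})
    (hR3 : ∀ G π ν (g : Equiv.Perm (Fin n)),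
      R (gactG g G) (gactC g π) (ν.map g) = gactC g (R G π ν))
    (hT1 : ∀ G π ν, Function.Injective (R G π ν) → T G π ν = ∅)
    (hT2 : ∀ G π ν, ¬ Function.Injective (R G π ν) →
      ∃ j, T G π ν = (R G π ν) ⁻¹' {j} ∧ ∃ v w, v ∈ T G π ν ∧ w ∈ T G π ν ∧ v ≠ w)
    (hT3 : ∀ G π ν (g : Equiv.Perm (Fin n)),
      T (gactG g G) (gactC g π) (ν.map g) = g '' (T G π ν))
    (φ : SimpleGraph (Fin n) → (Fin n → ℕ) → List (Fin n) → Ω)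
    (hφ1 : ∀ (G : SimpleGraph (Fin n)) (π₀ : Fin n → ℕ) (ν ν' : List (Fin n)),
      IsTNode (T G π₀) ν → IsTNode (T G π₀) ν' → ν ≠ ν' → ν.length = ν'.length →
      φ G π₀ ν < φ G π₀ ν' →
      ∀ ν₁ ν₁', IsTNode (T G π₀) ν₁ → ν <+: ν₁ → Function.Injective (R G π₀ ν₁) →
        IsTNode (T G π₀) ν₁' → ν' <+: ν₁' → Function.Injective (R G π₀ ν₁') →
        φ G π₀ ν₁ < φ G π₀ ν₁')
    (hφ2 : ∀ (G : SimpleGraph (Fin n)) (π₀ : Fin n → ℕ) (ν ν' : List (Fin n)),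
      IsTNode (T G π₀) ν → IsTNode (T G π₀) ν' →
      Function.Injective (R G π₀ ν) → Function.Injective (R G π₀ ν') →
      (φ G π₀ ν = φ G π₀ ν' ↔ relabelSet G (R G π₀ ν) = relabelSet G (R G π₀ ν')))
    (hφ3 : ∀ (G : SimpleGraph (Fin n)) (π₀ : Fin n → ℕ) (ν : List (Fin n))
      (g : Equiv.Perm (Fin n)), φ (gactG g G) (gactC g π₀) (ν.map g) = φ G π₀ ν)
    (hRcol : ∀ G π ν, IsCol (R G π ν))
    (G : SimpleGraph (Fin n)) (π₀ : Fin n → ℕ) (hπ₀ : IsCol π₀)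
    (ν : List (Fin n)) (hν : IsTNode (T G π₀) ν)
    (hd : Function.Injective (R G π₀ ν)) :
    ∀ g : Equiv.Perm (Fin n),
      (gactG g G = G ∧ gactC g π₀ = π₀) ↔
      ∃ ν' : List (Fin n), IsTNode (T G π₀) ν' ∧ Function.Injective (R G π₀ ν') ∧
        φ G π₀ ν' = φ G π₀ ν ∧ ∀ v, R G π₀ ν' (g v) = R G π₀ ν v := by
  intro g
  constructor
  · rintro ⟨hG, hπ⟩
    have hnode : ∀ μ : List (Fin n), IsTNode (T G π₀) μ → IsTNode (T G π₀) (μ.map g) := by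
      intro μ hμ
      induction hμ with
      | root => exact IsTNode.root
      | @child μ₁ w h1 hm ih =>
        rw [List.map_append, List.map_singleton]
        refine IsTNode.child ih ?_
        have hT := hT3 G π₀ μ₁ g
        rw [hG, hπ] at hT
        rw [hT]
        exact ⟨w, hm, rfl⟩
    have hRmap : R G π₀ (ν.map g) = gactC g (R G π₀ ν) := by
      have := hR3 G π₀ ν g
      rwa [hG, hπ] at this
    refine ⟨ν.map g, hnode ν hν, ?_, ?_, ?_⟩
    · rw [hRmap]
      exact hd.comp (g⁻¹ : Equiv.Perm (Fin n)).injective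
    · have := hφ3 G π₀ ν g
      rwa [hG, hπ] at this
    · intro v
      rw [hRmap]
      show R G π₀ ν (g⁻¹ (g v)) = R G π₀ ν v
      simp
  · rintro ⟨ν', hν', hinj', hφeq, hRg⟩
    have hrel : relabelSet G (R G π₀ ν') = relabelSet G (R G π₀ ν) :=
      (hφ2 G π₀ ν' ν hν' hν hinj' hd).mp hφeq
    have hadj : ∀ v w : Fin n, G.Adj v w ↔ G.Adj (g v) (g w) := by
      intro v w
      constructor
      · intro h
        have hm : (R G π₀ ν v, R G π₀ ν w) ∈ relabelSet G (R G π₀ ν') := by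
          rw [hrel]; exact ⟨v, w, h, rfl, rfl⟩
        obtain ⟨v', w', ha, h1, h2⟩ := hm
        have hv' : v' = g v := hinj' (h1.trans (hRg v).symm)
        have hw' : w' = g w := hinj' (h2.trans (hRg w).symm)
        rwa [hv', hw'] at ha
      · intro h
        have hm : (R G π₀ ν' (g v), R G π₀ ν' (g w)) ∈ relabelSet G (R G π₀ ν) := by
          rw [← hrel]; exact ⟨g v, g w, h, rfl, rfl⟩
        obtain ⟨v', w', ha, h1, h2⟩ := hm
        have hv' : v' = v := hd (h1.trans (hRg v))
        have hw' : w' = w := hd (h2.trans (hRg w))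
        rwa [hv', hw'] at ha
    have hcol : ∀ u : Fin n, π₀ u = π₀ (g u) := by
      intro u
      exact key_col hd hinj' (hRcol G π₀ ν) (hRcol G π₀ ν')
        (hR1 G π₀ ν) (hR1 G π₀ ν') (hRg u).symm
    constructor
    · ext v w
      show G.Adj (g⁻¹ v) (g⁻¹ w) ↔ G.Adj v w
      rw [hadj (g⁻¹ v) (g⁻¹ w)]
      simp
    · funext v
      show π₀ (g⁻¹ v) = π₀ v
      rw [hcol (g⁻¹ v)]
      simp
end
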